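/- Joint convexity lemma: let f: [0,∞) → ℝ be a twice continuously differentiable convex function with f'' > 0 on (0,∞) such that 1/f'' is concave. Then for any probability weights λ₁,…,λ_n ≥ 0 summing to 1, the function G(x₁,…,x_n) = Σ_i λ_i f(x_i) − f(Σ_i λ_i x_i) is jointly convex on (0,∞)^n. -/

import Mathlib

open Finset

/-- Joint convexity lemma: if `f` is convex on `[0,∞)`, twice continuously
differentiable with `f'' > 0` on `(0,∞)` and `1/f''` is concave there, then for
probability weights `λ_i`, `G(x) = Σ_i λ_i f(x_i) − f(Σ_i λ_i x_i)` is jointly convex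
on `(0,∞)^n`. -/
theorem stmt_14 (f : ℝ → ℝ)
    (hconv : ConvexOn ℝ (Set.Ici (0:ℝ)) f)
    (hsmooth : ContDiffOn ℝ 2 f (Set.Ioi (0:ℝ)))
    (hf'' : ∀ t ∈ Set.Ioi (0:ℝ), 0 < iteratedDeriv 2 f t)
    (hconc : ConcaveOn ℝ (Set.Ioi (0:ℝ)) (fun t => 1 / iteratedDeriv 2 f t))
    (n : ℕ) (l : Fin n → ℝ) (hl : ∀ i, 0 ≤ l i) (hl1 : ∑ i, l i = 1) :
    ConvexOn ℝ {x : Fin n → ℝ | ∀ i, 0 < x i}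
      (fun x => (∑ i, l i * f (x i)) - f (∑ i, l i * x i)) := by
  -- some positive weight exists
  obtain ⟨i₀, -, hi₀⟩ : ∃ i ∈ Finset.univ, 0 < l i := by
    by_contra h
    push_neg at h
    have : (∑ i, l i) ≤ 0 := Finset.sum_nonpos fun i hi => h i hi
    linarith
  set F2 : ℝ → ℝ := fun t => deriv (deriv f) t with hF2def
  have hI2 : ∀ t : ℝ, iteratedDeriv 2 f t = F2 t := by
    intro t
    rw [show (2:ℕ) = 1 + 1 from rfl, iteratedDeriv_succ, iteratedDeriv_one]
  have hF2pos : ∀ t : ℝ, 0 < t → 0 < F2 t := fun t ht => by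
    rw [← hI2]; exact hf'' t ht
  have hconc' : ConcaveOn ℝ (Set.Ioi (0:ℝ)) (fun t => 1 / F2 t) := by
    convert hconc using 2; rw [hI2]
  -- differentiability facts
  have hfd : ∀ t : ℝ, 0 < t → DifferentiableAt ℝ f t := fun t ht =>
    (hsmooth.differentiableOn two_ne_zero).differentiableAt (isOpen_Ioi.mem_nhds ht)
  have hf'cd : ContDiffOn ℝ 1 (deriv f) (Set.Ioi (0:ℝ)) :=
    hsmooth.deriv_of_isOpen isOpen_Ioi le_rfl
  have hf'd : ∀ t : ℝ, 0 < t → DifferentiableAt ℝ (deriv f) t := fun t ht =>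
    (hf'cd.differentiableOn one_ne_zero).differentiableAt (isOpen_Ioi.mem_nhds ht)
  -- key pointwise inequality (Jensen + Cauchy–Schwarz)
  have key : ∀ z d : Fin n → ℝ, (∀ i, 0 < z i) →
      (∑ i, l i * d i) ^ 2 * F2 (∑ i, l i * z i) ≤ ∑ i, l i * (d i ^ 2 * F2 (z i)) := by
    intro z d hz
    have hA : 0 < ∑ i, l i * z i :=
      Finset.sum_pos' (fun i _ => mul_nonneg (hl i) (hz i).le)
        ⟨i₀, Finset.mem_univ _, mul_pos hi₀ (hz i₀)⟩
    have hcA : 0 < F2 (∑ i, l i * z i) := hF2pos _ hA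
    have hci : ∀ i, 0 < F2 (z i) := fun i => hF2pos _ (hz i)
    -- Jensen for the concave function 1/F2
    have hjen : ∑ i, l i * (1 / F2 (z i)) ≤ 1 / F2 (∑ i, l i * z i) := by
      have := hconc'.le_map_sum (t := Finset.univ) (w := l) (p := z)
        (fun i _ => hl i) hl1 (fun i _ => hz i)
      simpa [smul_eq_mul] using this
    -- Cauchy–Schwarz
    have hcs : (∑ i, l i * d i) ^ 2 ≤
        (∑ i, l i * (d i ^ 2 * F2 (z i))) * ∑ i, l i * (1 / F2 (z i)) := by
      refine Finset.sum_sq_le_sum_mul_sum_of_sq_eq_mul Finset.univ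
        (fun i _ => mul_nonneg (hl i) (mul_nonneg (sq_nonneg _) (hci i).le))
        (fun i _ => mul_nonneg (hl i) (one_div_nonneg.2 (hci i).le)) (fun i _ => ?_)
      field_simp [(hci i).ne']
    have hS : 0 ≤ ∑ i, l i * (d i ^ 2 * F2 (z i)) :=
      Finset.sum_nonneg fun i _ => mul_nonneg (hl i) (mul_nonneg (sq_nonneg _) (hci i).le)
    have h2 : (∑ i, l i * d i) ^ 2 ≤
        (∑ i, l i * (d i ^ 2 * F2 (z i))) * (1 / F2 (∑ i, l i * z i)) :=
      hcs.trans (mul_le_mul_of_nonneg_left hjen hS)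
    rw [mul_one_div] at h2
    calc (∑ i, l i * d i) ^ 2 * F2 (∑ i, l i * z i)
        ≤ ((∑ i, l i * (d i ^ 2 * F2 (z i))) / F2 (∑ i, l i * z i)) * F2 (∑ i, l i * z i) :=
          mul_le_mul_of_nonneg_right h2 hcA.le
      _ = ∑ i, l i * (d i ^ 2 * F2 (z i)) := div_mul_cancel₀ _ hcA.ne'
  -- convexity of the domain
  have hsetconv : Convex ℝ {x : Fin n → ℝ | ∀ i, 0 < x i} := by
    intro x hx y hy a b ha hb hab
    intro i
    rcases eq_or_lt_of_le ha with rfl | ha'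
    · simp only [Pi.add_apply, Pi.smul_apply, smul_eq_mul]
      have : b = 1 := by linarith
      simp [this]; exact hy i
    · have : 0 < a * x i := mul_pos ha' (hx i)
      have : 0 ≤ b * y i := mul_nonneg hb (hy i).le
      simp only [Pi.add_apply, Pi.smul_apply, smul_eq_mul]
      linarith
  refine ⟨hsetconv, ?_⟩
  intro x hx y hy a b ha hb hab
  -- the restriction to the segment
  set d : Fin n → ℝ := fun i => y i - x i with hd
  set g : ℝ → ℝ := fun t =>
    (∑ i, l i * f (x i + t * d i)) - f (∑ i, l i * (x i + t * d i)) with hg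
  have hz : ∀ t ∈ Set.Icc (0:ℝ) 1, ∀ i, 0 < x i + t * d i := by
    intro t ht i
    rcases eq_or_lt_of_le ht.1 with rfl | ht0
    · simpa using hx i
    · have h1 : 0 ≤ (1 - t) * x i := mul_nonneg (by linarith [ht.2]) (hx i).le
      have h2 : 0 < t * y i := mul_pos ht0 (hy i)
      have : x i + t * d i = (1 - t) * x i + t * y i := by simp [hd]; ring
      rw [this]; linarith
  have hA : ∀ t ∈ Set.Icc (0:ℝ) 1, 0 < ∑ i, l i * (x i + t * d i) := fun t ht =>
    Finset.sum_pos' (fun i _ => mul_nonneg (hl i) (hz t ht i).le)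
      ⟨i₀, Finset.mem_univ _, mul_pos hi₀ (hz t ht i₀)⟩
  have hzd : ∀ (i : Fin n) (t : ℝ), HasDerivAt (fun s => x i + s * d i) (d i) t := by
    intro i t
    simpa using ((hasDerivAt_id t).mul_const (d i)).const_add (x i)
  have hAder : ∀ t : ℝ, HasDerivAt (fun s => ∑ i, l i * (x i + s * d i)) (∑ i, l i * d i) t := by
    intro t
    exact HasDerivAt.fun_sum fun i _ => ((hzd i t).const_mul (l i))
  set g1 : ℝ → ℝ := fun t =>
    (∑ i, l i * (deriv f (x i + t * d i) * d i)) -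
      deriv f (∑ i, l i * (x i + t * d i)) * (∑ i, l i * d i) with hg1
  have hgd : ∀ t ∈ Set.Icc (0:ℝ) 1, HasDerivAt g (g1 t) t := by
    intro t ht
    have h1 : HasDerivAt (fun s => ∑ i, l i * f (x i + s * d i))
        (∑ i, l i * (deriv f (x i + t * d i) * d i)) t := by
      refine HasDerivAt.fun_sum fun i _ => ?_
      exact (((hfd _ (hz t ht i)).hasDerivAt.comp t (hzd i t))).const_mul (l i)
    have h2 : HasDerivAt (fun s => f (∑ i, l i * (x i + s * d i)))
        (deriv f (∑ i, l i * (x i + t * d i)) * (∑ i, l i * d i)) t :=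
      (hfd _ (hA t ht)).hasDerivAt.comp t (hAder t)
    exact h1.sub h2
  set g2 : ℝ → ℝ := fun t =>
    (∑ i, l i * (F2 (x i + t * d i) * d i * d i)) -
      (F2 (∑ i, l i * (x i + t * d i)) * (∑ i, l i * d i)) * (∑ i, l i * d i) with hg2
  have hg1d : ∀ t ∈ Set.Icc (0:ℝ) 1, HasDerivAt g1 (g2 t) t := by
    intro t ht
    have h1 : HasDerivAt (fun s => ∑ i, l i * (deriv f (x i + s * d i) * d i))
        (∑ i, l i * (F2 (x i + t * d i) * d i * d i)) t := by
      refine HasDerivAt.fun_sum fun i _ => ?_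
      exact ((((hf'd _ (hz t ht i)).hasDerivAt.comp t (hzd i t))).mul_const (d i)).const_mul (l i)
    have h2 : HasDerivAt (fun s => deriv f (∑ i, l i * (x i + s * d i)) * (∑ i, l i * d i))
        ((F2 (∑ i, l i * (x i + t * d i)) * (∑ i, l i * d i)) * (∑ i, l i * d i)) t :=
      ((hf'd _ (hA t ht)).hasDerivAt.comp t (hAder t)).mul_const _
    exact h1.sub h2
  have hg2nonneg : ∀ t ∈ Set.Icc (0:ℝ) 1, 0 ≤ g2 t := by
    intro t ht
    have hk := key (fun i => x i + t * d i) d (hz t ht)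
    have he : ∑ i, l i * (d i ^ 2 * F2 (x i + t * d i)) =
        ∑ i, l i * (F2 (x i + t * d i) * d i * d i) :=
      Finset.sum_congr rfl fun i _ => by ring
    rw [he] at hk
    simp only [hg2]
    nlinarith [hk]
  -- convexity of g on [0,1]
  have hgconv : ConvexOn ℝ (Set.Icc (0:ℝ) 1) g := by
    have hint : interior (Set.Icc (0:ℝ) 1) = Set.Ioo 0 1 := interior_Icc
    refine convexOn_of_deriv2_nonneg (convex_Icc 0 1)
      (fun t ht => ((hgd t ht).continuousAt.continuousWithinAt)) ?_ ?_ ?_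
    · rw [hint]
      exact fun t ht => ((hgd t (Set.Ioo_subset_Icc_self ht)).differentiableAt).differentiableWithinAt
    · rw [hint]
      intro t ht
      have heq : deriv g =ᶠ[nhds t] g1 :=
        Filter.eventuallyEq_of_mem (isOpen_Ioo.mem_nhds ht)
          (fun s hs => (hgd s (Set.Ioo_subset_Icc_self hs)).deriv)
      exact ((heq.differentiableAt_iff).2
        (hg1d t (Set.Ioo_subset_Icc_self ht)).differentiableAt).differentiableWithinAt
    · rw [hint]
      intro t ht
      have heq : deriv g =ᶠ[nhds t] g1 :=
        Filter.eventuallyEq_of_mem (isOpen_Ioo.mem_nhds ht)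
          (fun s hs => (hgd s (Set.Ioo_subset_Icc_self hs)).deriv)
      have : deriv (deriv g) t = g2 t := by
        rw [heq.deriv_eq, (hg1d t (Set.Ioo_subset_Icc_self ht)).deriv]
      simp only [Function.iterate_succ, Function.iterate_zero, Function.comp_apply, id_eq]
      rw [this]
      exact hg2nonneg t (Set.Ioo_subset_Icc_self ht)
  -- conclude
  have h01 : (0:ℝ) ∈ Set.Icc (0:ℝ) 1 := by norm_num
  have h11 : (1:ℝ) ∈ Set.Icc (0:ℝ) 1 := by norm_num
  have hmain := hgconv.2 h01 h11 ha hb hab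
  simp only [smul_eq_mul, mul_zero, mul_one, zero_add] at hmain
  have hg0 : g 0 = (∑ i, l i * f (x i)) - f (∑ i, l i * x i) := by simp [hg]
  have hg1v : g 1 = (∑ i, l i * f (y i)) - f (∑ i, l i * y i) := by simp [hg, hd]
  have hgb : g b = (∑ i, l i * f ((a • x + b • y) i)) - f (∑ i, l i * (a • x + b • y) i) := by
    have hxy : ∀ i, (a • x + b • y) i = x i + b * d i := by
      intro i
      simp only [Pi.add_apply, Pi.smul_apply, smul_eq_mul, hd]
      have : a = 1 - b := by linarith
      rw [this]; ring
    simp only [hg, hxy]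
  rw [hg0, hg1v, hgb] at hmain
  exact hmain
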